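/- Let H be a Jacobi operator and z ∈ ℂ. If u, v ∈ ℂ^ℤ are solutions of Hu = zu and Hv = zv that are both square-summable at +∞ (i.e. Σ_{n≥0}|u_n|² < ∞ and Σ_{n≥0}|v_n|² < ∞), then u and v are linearly dependent; that is, a solution which is ℓ² at +∞ is unique up to a multiplicative constant. -/

import Mathlib

open scoped ComplexConjugate
open Filter Topology

noncomputable section

private lemma sol_zero_aux (a : ℤ → ℂ) (b : ℤ → ℝ) (ha0 : ∀ n, a n ≠ 0) (z : ℂ) (w : ℤ → ℂ)
    (hw : ∀ n : ℤ, (b n : ℂ) * w n + a n * w (n + 1) + conj (a (n - 1)) * w (n - 1) = z * w n)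
    (h0 : w 0 = 0) (h1 : w 1 = 0) : ∀ n, w n = 0 := by
  have key : ∀ n : ℤ, w n = 0 ∧ w (n + 1) = 0 := by
    intro n
    induction n using Int.induction_on with
    | zero => exact ⟨h0, h1⟩
    | succ i ih =>
      refine ⟨ih.2, ?_⟩
      have h := hw ((i : ℤ) + 1)
      have e : (i : ℤ) + 1 - 1 = (i : ℤ) := by ring
      rw [e, ih.1, ih.2] at h
      have h2 : a ((i:ℤ)+1) * w ((i:ℤ)+1+1) = 0 := by linear_combination h
      rcases mul_eq_zero.mp h2 with h' | h'
      · exact absurd h' (ha0 _)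
      · exact h'
    | pred i ih =>
      have h := hw (-(i : ℤ))
      rw [ih.1, ih.2] at h
      have h2 : conj (a (-(i:ℤ) - 1)) * w (-(i:ℤ) - 1) = 0 := by linear_combination h
      have hc : conj (a (-(i:ℤ) - 1)) ≠ 0 := by
        simpa using ha0 (-(i:ℤ) - 1)
      have hz : w (-(i:ℤ) - 1) = 0 := by
        rcases mul_eq_zero.mp h2 with h' | h'
        · exact absurd h' hc
        · exact h'
      constructor
      · exact hz
      · have e : -(i:ℤ) - 1 + 1 = -(i:ℤ) := by ring
        rw [e]; exact ih.1
  exact fun n => (key n).1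

/-- A solution of a Jacobi difference equation which is `ℓ²` at `+∞` is unique up to a
multiplicative constant: any two such solutions are linearly dependent. -/
theorem jacobi_l2_at_plus_infinity_solution_unique
    (a : ℤ → ℂ) (b : ℤ → ℝ)
    (ha0 : ∀ n, a n ≠ 0)
    (haB : ∃ C, ∀ n, ‖a n‖ ≤ C) (hbB : ∃ C, ∀ n, |b n| ≤ C)
    (z : ℂ) (u v : ℤ → ℂ)
    (hu : ∀ n : ℤ, (b n : ℂ) * u n + a n * u (n + 1) + conj (a (n - 1)) * u (n - 1) = z * u n)
    (hv : ∀ n : ℤ, (b n : ℂ) * v n + a n * v (n + 1) + conj (a (n - 1)) * v (n - 1) = z * v n)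
    (hu2 : Summable fun n : ℕ => ‖u (n : ℤ)‖ ^ 2)
    (hv2 : Summable fun n : ℕ => ‖v (n : ℤ)‖ ^ 2) :
    ∃ c d : ℂ, (c ≠ 0 ∨ d ≠ 0) ∧ ∀ n : ℤ, c * u n + d * v n = 0 := by
  -- the Wronskian
  set W : ℤ → ℂ := fun n => a n * (u (n+1) * v n - u n * v (n+1)) with hW
  -- key identity : constant modulus
  have key : ∀ n : ℤ, W n = conj (a (n-1)) * (u n * v (n-1) - u (n-1) * v n) := by
    intro n
    have h1 := hu n
    have h2 := hv n
    simp only [hW]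
    linear_combination v n * h1 - u n * h2
  have normstep : ∀ n : ℤ, ‖W n‖ = ‖W (n-1)‖ := by
    intro n
    rw [key n]
    have e : n - 1 + 1 = n := by ring
    simp only [hW, e]
    rw [norm_mul, norm_mul, RCLike.norm_conj]
  have normconst : ∀ k : ℕ, ‖W (k : ℤ)‖ = ‖W 0‖ := by
    intro k
    induction k with
    | zero => norm_num
    | succ m ih =>
      have e : ((m + 1 : ℕ) : ℤ) - 1 = (m : ℤ) := by push_cast; ring
      rw [normstep ((m+1 : ℕ) : ℤ), e, ih]
  -- u, v tend to zero along ℕ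
  have hu0 : Tendsto (fun k : ℕ => u (k : ℤ)) atTop (nhds 0) := by
    rw [tendsto_zero_iff_norm_tendsto_zero]
    have h := hu2.tendsto_atTop_zero
    have := h.sqrt
    rw [Real.sqrt_zero] at this
    refine this.congr fun n => ?_
    exact Real.sqrt_sq (norm_nonneg _)
  have hv0 : Tendsto (fun k : ℕ => v (k : ℤ)) atTop (nhds 0) := by
    rw [tendsto_zero_iff_norm_tendsto_zero]
    have h := hv2.tendsto_atTop_zero
    have := h.sqrt
    rw [Real.sqrt_zero] at this
    refine this.congr fun n => ?_
    exact Real.sqrt_sq (norm_nonneg _)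
  have hu1 : Tendsto (fun k : ℕ => u ((k : ℤ) + 1)) atTop (nhds 0) := by
    have := hu0.comp (tendsto_add_atTop_nat 1)
    refine this.congr fun n => ?_
    simp [Function.comp]
  have hv1 : Tendsto (fun k : ℕ => v ((k : ℤ) + 1)) atTop (nhds 0) := by
    have := hv0.comp (tendsto_add_atTop_nat 1)
    refine this.congr fun n => ?_
    simp [Function.comp]
  -- inner expression tends to zero
  have hinner : Tendsto (fun k : ℕ => u ((k:ℤ)+1) * v (k:ℤ) - u (k:ℤ) * v ((k:ℤ)+1)) atTop (nhds 0) := by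
    have := (hu1.mul hv0).sub (hu0.mul hv1)
    simpa using this
  obtain ⟨C, hC⟩ := haB
  have hC0 : 0 ≤ C := le_trans (norm_nonneg (a 0)) (hC 0)
  have hWn : Tendsto (fun k : ℕ => ‖W (k : ℤ)‖) atTop (nhds 0) := by
    have hb : Tendsto (fun k : ℕ => C * ‖u ((k:ℤ)+1) * v (k:ℤ) - u (k:ℤ) * v ((k:ℤ)+1)‖) atTop (nhds 0) := by
      have := (tendsto_zero_iff_norm_tendsto_zero.mp hinner).const_mul C
      simpa using this
    refine squeeze_zero (fun k => norm_nonneg _) (fun k => ?_) hb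
    simp only [hW, norm_mul]
    exact mul_le_mul_of_nonneg_right (hC _) (norm_nonneg _)
  have hW00 : ‖W 0‖ = 0 := by
    have : Tendsto (fun k : ℕ => ‖W (k : ℤ)‖) atTop (nhds ‖W 0‖) := by
      refine (tendsto_const_nhds).congr fun k => (normconst k).symm
    exact tendsto_nhds_unique this hWn
  have hdet : u 1 * v 0 - u 0 * v 1 = 0 := by
    have : W 0 = 0 := by rwa [norm_eq_zero] at hW00
    simp only [hW] at this
    rcases mul_eq_zero.mp this with h' | h'
    · exact absurd h' (ha0 0)
    · simpa using h'
  -- choose coefficients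
  by_cases h1 : u 1 = 0 ∧ v 1 = 0
  · by_cases h0 : u 0 = 0 ∧ v 0 = 0
    · refine ⟨1, 0, Or.inl one_ne_zero, ?_⟩
      have := sol_zero_aux a b ha0 z u hu h0.1 h1.1
      intro n; simp [this n]
    · refine ⟨v 0, -u 0, ?_, ?_⟩
      · rcases not_and_or.mp h0 with h | h
        · exact Or.inr (by simpa using h)
        · exact Or.inl h
      · have := sol_zero_aux a b ha0 z (fun n => v 0 * u n + (-u 0) * v n)
          (fun n => by
            have h1' := hu n
            have h2' := hv n
            linear_combination v 0 * h1' - u 0 * h2')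
          (by ring) (by simp [h1.1, h1.2])
        exact this
  · refine ⟨v 1, -u 1, ?_, ?_⟩
    · rcases not_and_or.mp h1 with h | h
      · exact Or.inr (by simpa using h)
      · exact Or.inl h
    · have := sol_zero_aux a b ha0 z (fun n => v 1 * u n + (-u 1) * v n)
        (fun n => by
          have h1' := hu n
          have h2' := hv n
          linear_combination v 1 * h1' - u 1 * h2')
        (by linear_combination -hdet) (by ring)
      exact this
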